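/- Consider Rule 2 on a ring of size n under the sequential update mode μ = (n-1, n-2, ..., 1, 0). For every initial configuration x ∈ {0,1}^n, there exists a time t such that applying t full sequential steps starting from x yields the all-zeros configuration 0^n. -/
import Mathlib


/-- Single-cell update: replace the state of cell `i` by the local rule applied
to its neighborhood on the ring `ZMod n`. -/
def eupdate (n : ℕ) (f : Bool → Bool → Bool → Bool) (x : ZMod n → Bool) (i : ZMod n) :
    ZMod n → Bool :=
  Function.update x i (f (x (i - 1)) (x i) (x (i + 1)))

/-- Synchronous (parallel) step. -/
def parStep (n : ℕ) (f : Bool → Bool → Bool → Bool) (x : ZMod n → Bool) : ZMod n → Bool :=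
  fun i => f (x (i - 1)) (x i) (x (i + 1))

/-- `x` is a fixed point of the parallel dynamics. -/
def IsFixedConfig (n : ℕ) (f : Bool → Bool → Bool → Bool) (x : ZMod n → Bool) : Prop :=
  ∀ i : ZMod n, f (x (i - 1)) (x i) (x (i + 1)) = x i

/-- One full sequential step under the sequential update mode `μ`
(a permutation of the cells): update cells one at a time in the order
`μ 0, μ 1, …, μ (n-1)`. -/
def seqStep (n : ℕ) (f : Bool → Bool → Bool → Bool) (μ : Fin n ≃ ZMod n)
    (x : ZMod n → Bool) : ZMod n → Bool :=
  (List.finRange n).foldl (fun y k => eupdate n f y (μ k)) x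

/-- One full sequential step under the descending order `(n-1, n-2, …, 0)`. -/
def seqStepDesc (n : ℕ) (f : Bool → Bool → Bool → Bool) (x : ZMod n → Bool) : ZMod n → Bool :=
  ((List.range n).reverse).foldl (fun y k => eupdate n f y (k : ZMod n)) x

/-- One full sequential step under the ascending order `(0, 1, …, n-1)`. -/
def seqStepAsc (n : ℕ) (f : Bool → Bool → Bool → Bool) (x : ZMod n → Bool) : ZMod n → Bool :=
  (List.range n).foldl (fun y k => eupdate n f y (k : ZMod n)) x

def rule2 : Bool → Bool → Bool → Bool
  | true, true, true => false
  | true, true, false => false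
  | true, false, true => false
  | true, false, false => false
  | false, true, true => false
  | false, true, false => false
  | false, false, true => true
  | false, false, false => false

/-! ### Auxiliary machinery -/

lemma rule2_right_false (a b : Bool) : rule2 a b false = false := by
  cases a <;> cases b <;> rfl

lemma rule2_left_true (b c : Bool) : rule2 true b c = false := by
  cases b <;> cases c <;> rfl

lemma rule2_eq_true {a b c : Bool} (h : rule2 a b c = true) : a = false ∧ c = true := by
  cases a <;> cases b <;> cases c <;> simp_all [rule2]

/-- Partial descending sweep: update cells `m-1, m-2, …, 0` in this order. -/
def gstep (n m : ℕ) (z : ZMod n → Bool) : ZMod n → Bool :=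
  ((List.range m).reverse).foldl (fun y k => eupdate n rule2 y (k : ZMod n)) z

lemma gstep_succ (n m : ℕ) (z : ZMod n → Bool) :
    gstep n (m + 1) z = gstep n m (eupdate n rule2 z (m : ZMod n)) := by
  simp [gstep, List.range_succ]

lemma seqStepDesc_eq_gstep (n : ℕ) (x : ZMod n → Bool) :
    seqStepDesc n rule2 x = gstep n n x := rfl

lemma natCast_val_eq {n : ℕ} [NeZero n] (i : ZMod n) : ((i.val : ℕ) : ZMod n) = i :=
  ZMod.natCast_val i |>.trans (ZMod.cast_id' ▸ rfl)

/-- Zero propagation: if the cell just to the right of the sweep start is `false`,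
then the descending partial sweep zeroes out all cells it visits. -/
lemma gstep_zero (n : ℕ) [NeZero n] :
    ∀ m, m ≤ n → ∀ z : ZMod n → Bool, z ((m : ℕ) : ZMod n) = false →
      ∀ i : ZMod n, gstep n m z i = if i.val < m then false else z i := by
  intro m
  induction m with
  | zero => intro _ z _ i; simp [gstep]
  | succ m ih =>
    intro hm z hz i
    rw [gstep_succ]
    set z' : ZMod n → Bool := eupdate n rule2 z (m : ZMod n) with hz'
    have hmn : m < n := hm
    have hvm : ((m : ℕ) : ZMod n).val = m := ZMod.val_cast_of_lt hmn
    have hz'm : z' ((m : ℕ) : ZMod n) = false := by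
      rw [hz']
      unfold eupdate
      rw [Function.update_self]
      have : ((m : ZMod n) + 1) = (((m + 1 : ℕ)) : ZMod n) := by push_cast; ring
      rw [this, hz, rule2_right_false]
    have := ih (le_of_lt hmn) z' hz'm i
    rw [this]
    by_cases h1 : i.val < m
    · simp [h1, lt_of_lt_of_le h1 (Nat.le_succ m)]
    · by_cases h2 : i.val = m
      · have hi : i = ((m : ℕ) : ZMod n) := by
          rw [← natCast_val_eq i, h2]
        rw [if_neg h1, if_pos (show i.val < m + 1 by omega), hi, hz'm]
      · have h3 : ¬ i.val < m + 1 := by omega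
        have hne : i ≠ ((m : ℕ) : ZMod n) := by
          intro h; apply h2; rw [h, hvm]
        simp only [if_neg h1, if_neg h3]
        rw [hz']
        unfold eupdate
        rw [Function.update_of_ne hne]

/-- Partial descending sweep from the top: update cells `n-1, n-2, …, m`. -/
def ustep (n m : ℕ) (x : ZMod n → Bool) : ZMod n → Bool :=
  ((List.range' m (n - m)).reverse).foldl (fun y k => eupdate n rule2 y (k : ZMod n)) x

lemma ustep_self (n : ℕ) (x : ZMod n → Bool) : ustep n n x = x := by
  simp [ustep]

lemma ustep_succ (n m : ℕ) (hm : m < n) (x : ZMod n → Bool) :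
    ustep n m x = eupdate n rule2 (ustep n (m + 1) x) (m : ZMod n) := by
  unfold ustep
  have h1 : n - m = (n - (m+1)) + 1 := by omega
  rw [h1, List.range'_succ]
  simp

lemma seqStepDesc_eq_ustep (n : ℕ) (hn : 0 < n) (x : ZMod n → Bool) :
    seqStepDesc n rule2 x = eupdate n rule2 (ustep n 1 x) ((0 : ℕ) : ZMod n) := by
  unfold seqStepDesc ustep
  have h1 : List.range n = 0 :: List.range' 1 (n - 1) := by
    rw [List.range_eq_range']
    obtain ⟨k, rfl⟩ : ∃ k, n = k + 1 := ⟨n - 1, by omega⟩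
    rw [List.range'_succ]
    simp
  rw [h1]
  simp

/-- Chain lemma: during the descending sweep, a cell can only become `true` if the
cell at `n-1` became `true`. -/
lemma ustep_chain (n : ℕ) [NeZero n] (x : ZMod n → Bool) :
    ∀ d m, m + d + 1 = n → 1 ≤ m →
      (ustep n m x) ((m : ℕ) : ZMod n) = true →
      (ustep n m x) (((n - 1 : ℕ)) : ZMod n) = true := by
  intro d
  induction d with
  | zero =>
    intro m hmd _ h
    have : m = n - 1 := by omega
    rwa [← this]
  | succ d ih =>
    intro m hmd hm1 h
    have hmn : m < n := by omega
    rw [ustep_succ n m hmn] at h ⊢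
    set u := ustep n (m + 1) x with hu
    unfold eupdate at h ⊢
    rw [Function.update_self] at h
    have hr : ((m : ZMod n) + 1) = (((m + 1 : ℕ)) : ZMod n) := by push_cast; ring
    rw [hr] at h
    have hc := (rule2_eq_true h).2
    have hchain := ih (m + 1) (by omega) (by omega) hc
    rw [← hu] at hchain
    have hne : (((n - 1 : ℕ)) : ZMod n) ≠ ((m : ℕ) : ZMod n) := by
      intro hcon
      have h1 : ((n - 1 : ℕ) : ZMod n).val = n - 1 := ZMod.val_cast_of_lt (by omega)
      have h2 : ((m : ℕ) : ZMod n).val = m := ZMod.val_cast_of_lt hmn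
      rw [hcon, h2] at h1
      omega
    rw [Function.update_of_ne hne]
    exact hchain

/-- After one descending step, cell `0` is `false`. -/
lemma seqStepDesc_zero (n : ℕ) [NeZero n] (x : ZMod n → Bool) :
    (seqStepDesc n rule2 x) 0 = false := by
  have hn : 0 < n := Nat.pos_of_ne_zero (NeZero.ne n)
  rw [seqStepDesc_eq_ustep n hn x]
  set u := ustep n 1 x with hu
  unfold eupdate
  have h0 : ((0 : ℕ) : ZMod n) = (0 : ZMod n) := by push_cast; rfl
  rw [h0, Function.update_self]
  rcases Nat.lt_or_ge n 2 with h2 | h2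
  · -- n = 1
    have hn1 : n = 1 := by omega
    subst hn1
    have hu1 : u = x := by rw [hu]; exact ustep_self 1 x
    have e1 : ((0 : ZMod 1) - 1) = 0 := by decide
    have e2 : ((0 : ZMod 1) + 1) = 0 := by decide
    rw [hu1, e1, e2]
    cases x 0 <;> rfl
  · -- n ≥ 2
    by_cases h1 : u (((1 : ℕ)) : ZMod n) = true
    · have hchain := ustep_chain n x (n - 2) 1 (by omega) le_rfl (by rw [← hu]; exact h1)
      rw [← hu] at hchain
      have hleft : ((0 : ZMod n) - 1) = (((n - 1 : ℕ)) : ZMod n) := by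
        have : ((n - 1 : ℕ) : ZMod n) = (n : ZMod n) - 1 := by
          push_cast [Nat.cast_sub (by omega : 1 ≤ n)]; ring
        rw [this, ZMod.natCast_self]
      rw [hleft, hchain, rule2_left_true]
    · have h1' : u (((1 : ℕ)) : ZMod n) = false := by
        cases hh : u (((1 : ℕ)) : ZMod n)
        · rfl
        · exact absurd hh h1
      have hr : ((0 : ZMod n) + 1) = (((1 : ℕ)) : ZMod n) := by push_cast; ring
      rw [hr, h1', rule2_right_false]

/-- If cell `0` is `false`, one descending step yields the all-zero configuration. -/
lemma seqStepDesc_all_false (n : ℕ) [NeZero n] (y : ZMod n → Bool) (hy : y 0 = false) :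
    seqStepDesc n rule2 y = fun _ => false := by
  funext i
  rw [seqStepDesc_eq_gstep]
  have hcond : y ((n : ℕ) : ZMod n) = false := by
    rwa [ZMod.natCast_self]
  rw [gstep_zero n n le_rfl y hcond i]
  simp [ZMod.val_lt i]

theorem rule2_desc_converges (n : ℕ) (hn : 0 < n) (x : ZMod n → Bool) :
    ∃ t : ℕ, (seqStepDesc n rule2)^[t] x = fun _ => false := by
  haveI : NeZero n := ⟨hn.ne'⟩
  refine ⟨2, ?_⟩
  have h1 : (seqStepDesc n rule2 x) 0 = false := seqStepDesc_zero n x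
  have h2 := seqStepDesc_all_false n (seqStepDesc n rule2 x) h1
  simpa [Function.iterate_succ_apply, Function.iterate_one] using h2
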